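/- arXiv:2105.14812 — 2 statements merged into one kernel-verified Lean document; each statement's English description precedes it below -/
import Mathlib

section
/- Equip the range Im R with the inner product ⟨f,g⟩_{Im R} := ⟨R♯f, R♯g⟩_{L²}, where R♯ denotes the Moore–Penrose inverse (minimal-norm solution map). Then for every θ̃ ∈ P, every f ∈ Im R and every v ∈ ℝⁿ, the reproducing property ⟨v, f(θ̃)⟩_{ℝⁿ} = ⟨Q(·,θ̃)v, f⟩_{Im R} holds, where Q(θ,θ̃) = ∫₀ᵀ e^{A(θ)(T−s)} B(θ) B(θ̃)ᵀ e^{A(θ̃)ᵀ(T−s)} ds. Hence Im R is a reproducing kernel Hilbert space with kernel Q. -/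
open MeasureTheory Matrix Set NormedSpace Filter
open scoped RealInnerProductSpace
noncomputable section

/-- Lebesgue measure restricted to `[0,T]`. -/
def muT (T : ℝ) : Measure ℝ := MeasureTheory.volume.restrict (Set.Icc (0:ℝ) T)

/-- The space `L²([0,T], ℝᵐ)`. -/
abbrev L2 (m : ℕ) (T : ℝ) := MeasureTheory.Lp (EuclideanSpace ℝ (Fin m)) 2 (muT T)

/-- Single-parameter reachability map `u ↦ ∫₀ᵀ e^{A(T-s)} B u(s) ds`. -/
def RopK {n m : ℕ} (T : ℝ) (A : Matrix (Fin n) (Fin n) ℝ) (B : Matrix (Fin n) (Fin m) ℝ)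
    (u : L2 m T) : EuclideanSpace ℝ (Fin n) :=
  ∫ s in Set.Icc (0:ℝ) T, WithLp.toLp 2 (((NormedSpace.exp ((T - s) • A)) * B).mulVec (u s))

/-- The adjoint kernel `s ↦ Bᵀ e^{Aᵀ(T-s)} v`. -/
def RadjK {n m : ℕ} (T : ℝ) (A : Matrix (Fin n) (Fin n) ℝ) (B : Matrix (Fin n) (Fin m) ℝ)
    (v : EuclideanSpace ℝ (Fin n)) (s : ℝ) : EuclideanSpace ℝ (Fin m) :=
  WithLp.toLp 2 ((Bᵀ * NormedSpace.exp ((T - s) • Aᵀ)).mulVec v)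

/-- Parametrized reachability operator `(Ru)(θ)`. -/
def RopFam {n m : ℕ} (T : ℝ) (A : ℝ → Matrix (Fin n) (Fin n) ℝ)
    (B : ℝ → Matrix (Fin n) (Fin m) ℝ) (u : L2 m T) (θ : ℝ) : EuclideanSpace ℝ (Fin n) :=
  RopK T (A θ) (B θ) u

/-- The reproducing kernel `Q(θ, θ')`. -/
def Qfun {n m : ℕ} (T : ℝ) (A : ℝ → Matrix (Fin n) (Fin n) ℝ)
    (B : ℝ → Matrix (Fin n) (Fin m) ℝ) (θ θ' : ℝ) : Matrix (Fin n) (Fin n) ℝ :=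
  Matrix.of fun i j => ∫ s in Set.Icc (0:ℝ) T,
    (NormedSpace.exp ((T - s) • A θ) * B θ * (B θ')ᵀ * NormedSpace.exp ((T - s) • (A θ')ᵀ)) i j

/-- Controllability Gramian of `(A,B)` on `[0,T]`. -/
def Gram {n m : ℕ} (T : ℝ) (A : Matrix (Fin n) (Fin n) ℝ) (B : Matrix (Fin n) (Fin m) ℝ) :
    Matrix (Fin n) (Fin n) ℝ :=
  Matrix.of fun i j => ∫ s in Set.Icc (0:ℝ) T,
    ((NormedSpace.exp ((T - s) • A)) * B * Bᵀ * (NormedSpace.exp ((T - s) • Aᵀ))) i j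

/-! ### Auxiliary lemmas -/

open scoped ENNReal

section Aux

variable {n m : ℕ}

/-- Explicit coercion from plain pi vectors to `EuclideanSpace`, to keep instances aligned. -/
def toE {k : ℕ} (x : Fin k → ℝ) : EuclideanSpace ℝ (Fin k) := WithLp.toLp 2 x

@[simp] lemma toE_apply {k : ℕ} (x : Fin k → ℝ) (i : Fin k) : toE x i = x i := rfl

instance muT_finite (T : ℝ) : IsFiniteMeasure (muT T) :=
  ⟨by rw [muT, Measure.restrict_apply_univ]; exact measure_Icc_lt_top⟩

lemma exp_cont (k : ℕ) :
    Continuous (NormedSpace.exp : Matrix (Fin k) (Fin k) ℝ → Matrix (Fin k) (Fin k) ℝ) := by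
  letI : SeminormedRing (Matrix (Fin k) (Fin k) ℝ) := Matrix.linftyOpSemiNormedRing
  letI : NormedRing (Matrix (Fin k) (Fin k) ℝ) := Matrix.linftyOpNormedRing
  letI : NormedAlgebra ℝ (Matrix (Fin k) (Fin k) ℝ) := Matrix.linftyOpNormedAlgebra
  letI : NormedAlgebra ℚ (Matrix (Fin k) (Fin k) ℝ) := .restrictScalars ℚ ℝ _
  exact exp_continuous

lemma contExpSmul (T : ℝ) (A : Matrix (Fin n) (Fin n) ℝ) :
    Continuous fun s : ℝ => NormedSpace.exp ((T - s) • A) :=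
  (exp_cont n).comp ((continuous_const.sub continuous_id).smul continuous_const)

lemma contM (T : ℝ) (A : Matrix (Fin n) (Fin n) ℝ) (B : Matrix (Fin n) (Fin m) ℝ) :
    Continuous fun s : ℝ => NormedSpace.exp ((T - s) • A) * B :=
  (contExpSmul T A).matrix_mul continuous_const

lemma contE {k : ℕ} {f : ℝ → (Fin k → ℝ)} (hf : Continuous f) :
    Continuous fun s => toE (f s) :=
  (PiLp.continuousLinearEquiv 2 ℝ (fun _ : Fin k => ℝ)).symm.continuous.comp hf

lemma ae_mem_Icc (T : ℝ) : ∀ᵐ s ∂(muT T), s ∈ Set.Icc (0:ℝ) T := by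
  unfold muT; exact ae_restrict_mem measurableSet_Icc

lemma sum_single {k : ℕ} (x : EuclideanSpace ℝ (Fin k)) :
    ∑ i, x i • EuclideanSpace.single i (1:ℝ) = x := by
  have h := (EuclideanSpace.basisFun (Fin k) ℝ).sum_repr x
  simpa [EuclideanSpace.basisFun_apply, EuclideanSpace.basisFun_repr] using h

lemma integrable_coords {μ : Measure ℝ} {f : ℝ → EuclideanSpace ℝ (Fin n)}
    (h : ∀ i, Integrable (fun s => f s i) μ) : Integrable f μ := by
  have hf : f = fun s => ∑ i : Fin n, (f s i) • (EuclideanSpace.single i (1:ℝ)) := by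
    funext s
    exact (sum_single (f s)).symm
  rw [hf]
  exact integrable_finset_sum _ fun i _ => (h i).smul_const _

lemma u_coord_integrable (T : ℝ) (u : L2 m T) (j : Fin m) :
    Integrable (fun s => u s j) (muT T) :=
  (EuclideanSpace.proj j : EuclideanSpace ℝ (Fin m) →L[ℝ] ℝ).integrable_comp
    ((Lp.memLp u).integrable (by norm_num : (1:ℝ≥0∞) ≤ 2))

lemma integrable_mulVec (T : ℝ) {M : ℝ → Matrix (Fin n) (Fin m) ℝ} (hM : Continuous M)
    (u : L2 m T) :
    Integrable (fun s => toE ((M s).mulVec (u s))) (muT T) := by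
  apply integrable_coords
  intro i
  have he : (fun s => toE ((M s).mulVec (u s)) i)
      = fun s => ∑ j : Fin m, M s i j * u s j := by
    funext s; simp [Matrix.mulVec, dotProduct]
  rw [he]
  apply integrable_finset_sum
  intro j _
  obtain ⟨C, hC⟩ := isCompact_Icc.exists_bound_of_continuousOn
    ((hM.matrix_elem i j).continuousOn (s := Set.Icc (0:ℝ) T))
  refine (u_coord_integrable T u j).bdd_mul (c := C)
    (hM.matrix_elem i j).aestronglyMeasurable ?_
  filter_upwards [ae_mem_Icc T] with s hs using hC s hs

lemma RopK_def (T : ℝ) (A : Matrix (Fin n) (Fin n) ℝ) (B : Matrix (Fin n) (Fin m) ℝ)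
    (u : L2 m T) :
    RopK T A B u = ∫ s, toE (((NormedSpace.exp ((T - s) • A)) * B).mulVec (u s)) ∂(muT T) :=
  rfl

lemma RopK_add_smul (T : ℝ) (A : Matrix (Fin n) (Fin n) ℝ) (B : Matrix (Fin n) (Fin m) ℝ)
    (u w : L2 m T) (t : ℝ) :
    RopK T A B (u + t • w) = RopK T A B u + t • RopK T A B w := by
  have h1 := integrable_mulVec T (contM T A B) u
  have h2 := integrable_mulVec T (contM T A B) w
  rw [RopK_def, RopK_def, RopK_def]
  have hcong : (fun s => toE (((NormedSpace.exp ((T - s) • A)) * B).mulVec ((u + t • w) s)))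
      =ᵐ[muT T] fun s => toE (((NormedSpace.exp ((T - s) • A)) * B).mulVec (u s))
        + t • toE (((NormedSpace.exp ((T - s) • A)) * B).mulVec (w s)) := by
    filter_upwards [Lp.coeFn_add u (t • w), Lp.coeFn_smul t w] with s hs1 hs2
    simp only [Pi.add_apply] at hs1
    simp only [Pi.smul_apply] at hs2
    rw [hs1, hs2]
    show toE (_ *ᵥ ((u s : Fin m → ℝ) + t • (w s : Fin m → ℝ))) = _
    rw [Matrix.mulVec_add, Matrix.mulVec_smul]
    rfl
  have hsm : Integrable (fun s => t • toE (((NormedSpace.exp ((T - s) • A)) * B).mulVec (w s))) (muT T) :=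
    h2.smul t
  rw [integral_congr_ae hcong, integral_add h1 hsm, integral_smul]

lemma inner_transpose_mulVec (M : Matrix (Fin n) (Fin m) ℝ) (v : EuclideanSpace ℝ (Fin n))
    (x : EuclideanSpace ℝ (Fin m)) :
    ⟪toE (Mᵀ.mulVec v), x⟫ = ⟪v, toE (M.mulVec x)⟫ := by
  simp only [PiLp.inner_apply, RCLike.inner_apply, conj_trivial, toE_apply, Matrix.mulVec,
    dotProduct, Matrix.transpose_apply, Finset.sum_mul, Finset.mul_sum]
  rw [Finset.sum_comm]
  refine Finset.sum_congr rfl fun i _ => Finset.sum_congr rfl fun j _ => by ring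

lemma inner_RopK (T : ℝ) (A : Matrix (Fin n) (Fin n) ℝ) (B : Matrix (Fin n) (Fin m) ℝ)
    (v : EuclideanSpace ℝ (Fin n)) (u : L2 m T) :
    ⟪v, RopK T A B u⟫
      = ∫ s, ⟪RadjK T A B v s, (u s : EuclideanSpace ℝ (Fin m))⟫ ∂(muT T) := by
  have h1 := integrable_mulVec T (contM T A B) u
  rw [RopK_def, ← integral_inner h1 v]
  refine integral_congr_ae (Eventually.of_forall fun s => ?_)
  have hTr : RadjK T A B v s = toE ((((NormedSpace.exp ((T - s) • A)) * B)ᵀ).mulVec v) := by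
    show toE ((Bᵀ * NormedSpace.exp ((T - s) • Aᵀ)).mulVec v) = _
    rw [Matrix.transpose_mul, ← Matrix.exp_transpose, Matrix.transpose_smul]
  dsimp only
  rw [hTr, inner_transpose_mulVec]

lemma radj_cont (T : ℝ) (A : Matrix (Fin n) (Fin n) ℝ) (B : Matrix (Fin n) (Fin m) ℝ)
    (v : EuclideanSpace ℝ (Fin n)) : Continuous (RadjK T A B v) := by
  have : Continuous fun s : ℝ => toE ((Bᵀ * NormedSpace.exp ((T - s) • Aᵀ)).mulVec v) :=
    contE ((continuous_const.matrix_mul (contExpSmul T Aᵀ)).matrix_mulVec continuous_const)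
  exact this

lemma radj_mem (T : ℝ) (A : Matrix (Fin n) (Fin n) ℝ) (B : Matrix (Fin n) (Fin m) ℝ)
    (v : EuclideanSpace ℝ (Fin n)) : MemLp (RadjK T A B v) 2 (muT T) := by
  obtain ⟨C, hC⟩ := isCompact_Icc.exists_bound_of_continuousOn
    ((radj_cont T A B v).continuousOn (s := Set.Icc (0:ℝ) T))
  exact MemLp.of_bound (radj_cont T A B v).aestronglyMeasurable C
    (by filter_upwards [ae_mem_Icc T] with s hs using hC s hs)

lemma integral_coord {μ : Measure ℝ} {f : ℝ → EuclideanSpace ℝ (Fin n)}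
    (hf : Integrable f μ) (i : Fin n) :
    (∫ s, f s ∂μ) i = ∫ s, f s i ∂μ := by
  simpa using
    ((EuclideanSpace.proj i : EuclideanSpace ℝ (Fin n) →L[ℝ] ℝ).integral_comp_comm hf).symm

lemma RopK_radj (T : ℝ) (A1 : Matrix (Fin n) (Fin n) ℝ) (B1 : Matrix (Fin n) (Fin m) ℝ)
    (A2 : Matrix (Fin n) (Fin n) ℝ) (B2 : Matrix (Fin n) (Fin m) ℝ)
    (v : EuclideanSpace ℝ (Fin n)) (w : L2 m T)
    (hw : (fun s => (w s : EuclideanSpace ℝ (Fin m))) =ᵐ[muT T] RadjK T A2 B2 v) :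
    RopK T A1 B1 w
      = toE ((Matrix.of fun i j => ∫ s in Set.Icc (0:ℝ) T,
          (NormedSpace.exp ((T - s) • A1) * B1 * B2ᵀ * NormedSpace.exp ((T - s) • A2ᵀ)) i j).mulVec v) := by
  set N : ℝ → Matrix (Fin n) (Fin n) ℝ :=
    fun s => NormedSpace.exp ((T - s) • A1) * B1 * B2ᵀ * NormedSpace.exp ((T - s) • A2ᵀ) with hN
  have hNc : Continuous N :=
    ((contM T A1 B1).matrix_mul continuous_const).matrix_mul (contExpSmul T A2ᵀ)
  have hNint : Integrable (fun s => toE ((N s).mulVec v)) (muT T) :=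
    (contE (hNc.matrix_mulVec continuous_const)).integrableOn_Icc
  have hstep : RopK T A1 B1 w = ∫ s, toE ((N s).mulVec v) ∂(muT T) := by
    rw [RopK_def]
    refine integral_congr_ae ?_
    filter_upwards [hw] with s hs
    rw [show ((w s : EuclideanSpace ℝ (Fin m))) = RadjK T A2 B2 v s from hs]
    show toE ((NormedSpace.exp ((T - s) • A1) * B1) *ᵥ ((B2ᵀ * NormedSpace.exp ((T - s) • A2ᵀ)) *ᵥ v)) = _
    rw [Matrix.mulVec_mulVec, ← Matrix.mul_assoc]
  rw [hstep]
  ext i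
  rw [integral_coord hNint i]
  have hRHS : toE ((Matrix.of fun i j => ∫ s in Set.Icc (0:ℝ) T, N s i j).mulVec v) i
      = ∑ j, (∫ s, N s i j ∂(muT T)) * v j := by
    simp [toE, Matrix.mulVec, dotProduct, muT]
  rw [hRHS]
  have hmul : ∀ j : Fin n, (∫ s, N s i j ∂(muT T)) * v j = ∫ s, N s i j * v j ∂(muT T) :=
    fun j => (integral_mul_const (v j) _).symm
  rw [Finset.sum_congr rfl fun j _ => hmul j, ← integral_finset_sum]
  · refine integral_congr_ae (Eventually.of_forall fun s => ?_)
    simp [toE, Matrix.mulVec, dotProduct]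
  · intro j _
    exact ((hNc.matrix_elem i j).mul continuous_const).integrableOn_Icc

lemma inner_eq_zero_of_min {H : Type*} [NormedAddCommGroup H] [InnerProductSpace ℝ H]
    {x k : H} (h : ∀ t : ℝ, ‖x‖ ≤ ‖x + t • k‖) : ⟪k, x⟫ = 0 := by
  by_contra h0
  have hk : k ≠ 0 := by rintro rfl; simp at h0
  have hk2 : (0:ℝ) < ‖k‖ ^ 2 := pow_pos (norm_pos_iff.mpr hk) 2
  set t : ℝ := -⟪k, x⟫ / ‖k‖ ^ 2 with ht
  have hx2 : ‖x‖ ^ 2 ≤ ‖x + t • k‖ ^ 2 := pow_le_pow_left₀ (norm_nonneg x) (h t) 2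
  have hexp : ‖x + t • k‖ ^ 2 = ‖x‖ ^ 2 + 2 * (t * ⟪x, k⟫) + t ^ 2 * ‖k‖ ^ 2 := by
    rw [norm_add_sq_real, real_inner_smul_right, norm_smul, Real.norm_eq_abs, mul_pow, sq_abs]
  have hcomm : ⟪x, k⟫ = ⟪k, x⟫ := real_inner_comm k x
  rw [hexp, hcomm, ht] at hx2
  have heq : ‖x‖ ^ 2 + 2 * (-⟪k, x⟫ / ‖k‖ ^ 2 * ⟪k, x⟫) + (-⟪k, x⟫ / ‖k‖ ^ 2) ^ 2 * ‖k‖ ^ 2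
      = ‖x‖ ^ 2 - ⟪k, x⟫ ^ 2 / ‖k‖ ^ 2 := by
    field_simp
    ring
  rw [heq] at hx2
  have hpos : (0:ℝ) < ⟪k, x⟫ ^ 2 / ‖k‖ ^ 2 := div_pos (pow_two_pos_of_ne_zero h0) hk2
  linarith

end Aux

/-- reproducing property of the kernel `Q` for the inner product
`⟨f,g⟩_{Im R} = ⟨R♯f, R♯g⟩_{L²}` on the range of `R`.  Here `f = R uf` with `uf = R♯f` the
minimal-norm solution, and `uQ = R♯(Q(·,θ̃)v)` the minimal-norm solution for the kernel
section.  Then `⟨v, f(θ̃)⟩_{ℝⁿ} = ⟨Q(·,θ̃)v, f⟩_{Im R} = ⟨uQ, uf⟩_{L²}`. -/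
theorem reproducing_property {n m : ℕ} (T θm θp : ℝ) (hT : 0 < T) (hθ : θm ≤ θp)
    (A : ℝ → Matrix (Fin n) (Fin n) ℝ) (B : ℝ → Matrix (Fin n) (Fin m) ℝ)
    (hA : ∀ i j, Continuous fun θ => A θ i j) (hB : ∀ i j, Continuous fun θ => B θ i j)
    (uf : L2 m T)
    (hufmin : ∀ w : L2 m T,
      (∀ θ ∈ Set.Icc θm θp, RopFam T A B w θ = RopFam T A B uf θ) → ‖uf‖ ≤ ‖w‖)
    (θt : ℝ) (hθt : θt ∈ Set.Icc θm θp) (v : EuclideanSpace ℝ (Fin n))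
    (uQ : L2 m T)
    (huQ : ∀ θ ∈ Set.Icc θm θp, RopFam T A B uQ θ = (Qfun T A B θ θt).mulVec v)
    (huQmin : ∀ w : L2 m T,
      (∀ θ ∈ Set.Icc θm θp, RopFam T A B w θ = (Qfun T A B θ θt).mulVec v) → ‖uQ‖ ≤ ‖w‖) :
    ⟪v, RopFam T A B uf θt⟫ = ⟪uQ, uf⟫ := by
  classical
  have hwmem : MemLp (RadjK T (A θt) (B θt) v) 2 (muT T) := radj_mem T (A θt) (B θt) v
  set w : L2 m T := hwmem.toLp _ with hwdef
  have hwae : (fun s => (w s : EuclideanSpace ℝ (Fin m))) =ᵐ[muT T] RadjK T (A θt) (B θt) v :=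
    hwmem.coeFn_toLp
  have hwR : ∀ θ, RopFam T A B w θ = (Qfun T A B θ θt).mulVec v := fun θ => by
    rw [RopFam, RopK_radj T (A θ) (B θ) (A θt) (B θt) v w hwae]; rfl
  have hlin : ∀ (u1 u2 : L2 m T) (t : ℝ) (θ : ℝ),
      RopFam T A B (u1 + t • u2) θ = RopFam T A B u1 θ + t • RopFam T A B u2 θ :=
    fun u1 u2 t θ => RopK_add_smul T (A θ) (B θ) u1 u2 t
  have hker : ∀ θ ∈ Set.Icc θm θp, RopFam T A B (uQ + (-1 : ℝ) • w) θ = 0 := by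
    intro θ hθmem
    rw [hlin uQ w (-1) θ, WithLp.ofLp_injective 2 ((huQ θ hθmem).trans (hwR θ).symm)]
    simp
  have horth : ⟪(uQ + (-1 : ℝ) • w : L2 m T), uf⟫ = 0 := by
    apply inner_eq_zero_of_min
    intro t
    apply hufmin
    intro θ hθmem
    rw [hlin uf (uQ + (-1 : ℝ) • w) t θ, hker θ hθmem]
    simp
  have hsplit : (uQ : L2 m T) = w + (uQ + (-1 : ℝ) • w) := by module
  have h1 : ⟪uQ, uf⟫ = ⟪w, uf⟫ := by
    conv_lhs => rw [hsplit]
    rw [inner_add_left, horth, add_zero]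
  have h2 : ⟪w, uf⟫
      = ∫ s, ⟪(w s : EuclideanSpace ℝ (Fin m)), (uf s : EuclideanSpace ℝ (Fin m))⟫ ∂(muT T) :=
    MeasureTheory.L2.inner_def w uf
  have h3 : (∫ s, ⟪(w s : EuclideanSpace ℝ (Fin m)), (uf s : EuclideanSpace ℝ (Fin m))⟫ ∂(muT T))
      = ∫ s, ⟪RadjK T (A θt) (B θt) v s, (uf s : EuclideanSpace ℝ (Fin m))⟫ ∂(muT T) := by
    refine integral_congr_ae ?_
    filter_upwards [hwae] with s hs
    rw [show ((w s : EuclideanSpace ℝ (Fin m))) = RadjK T (A θt) (B θt) v s from hs]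
  rw [h1, h2, h3, ← inner_RopK T (A θt) (B θt) v uf]
  rfl
end
end

section
/- If f ∈ Im R and the fill distance Δ_N = sup_{θ∈P} min_{i≤N} |θ_i − θ| tends to 0, then the collocation solutions u_{∥N} converge in L²([0,T],ℝᵐ) to the minimal-norm solution R♯ f of R u = f. -/
open MeasureTheory Matrix Set NormedSpace Filter
open scoped RealInnerProductSpace
noncomputable section

namespace Colloc

open scoped ENNReal

attribute [local instance] Matrix.linftyOpNormedRing Matrix.linftyOpNormedAlgebra

instance muT_finite (T : ℝ) : IsFiniteMeasure (muT T) := by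
  constructor
  rw [muT, Measure.restrict_apply_univ, Real.volume_Icc]
  exact ENNReal.ofReal_lt_top

lemma memLp_of_cont {m : ℕ} (T : ℝ) (φ : ℝ → EuclideanSpace ℝ (Fin m)) (hφ : Continuous φ) :
    MemLp φ 2 (muT T) := by
  obtain ⟨C, hC⟩ := (isCompact_Icc (a := (0:ℝ)) (b := T)).exists_bound_of_continuousOn
    hφ.continuousOn
  refine MemLp.of_bound hφ.aestronglyMeasurable C ?_
  rw [muT]
  filter_upwards [ae_restrict_mem measurableSet_Icc] with s hs using hC s hs

lemma norm_toLp_sub_le {m : ℕ} {T : ℝ} (hT : 0 ≤ T) {φ ψ : ℝ → EuclideanSpace ℝ (Fin m)}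
    (hφ : MemLp φ 2 (muT T)) (hψ : MemLp ψ 2 (muT T)) {c : ℝ} (hc : 0 ≤ c)
    (h : ∀ s ∈ Set.Icc (0:ℝ) T, ‖φ s - ψ s‖ ≤ c) :
    ‖hφ.toLp φ - hψ.toLp ψ‖ ≤ c * Real.sqrt T := by
  rw [← MemLp.toLp_sub hφ hψ, Lp.norm_toLp]
  have hb : ∀ᵐ s ∂(muT T), ‖φ s - ψ s‖ ≤ c := by
    rw [muT]; filter_upwards [ae_restrict_mem measurableSet_Icc] with s hs using h s hs
  refine le_trans (ENNReal.toReal_le_of_le_ofReal (by positivity) ?_) le_rfl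
  calc eLpNorm (φ - ψ) 2 (muT T) ≤ (muT T) Set.univ ^ ((2:ℝ≥0∞).toReal)⁻¹ * ENNReal.ofReal c :=
        eLpNorm_le_of_ae_bound hb
    _ ≤ ENNReal.ofReal (c * Real.sqrt T) := by
        rw [muT, Measure.restrict_apply_univ, Real.volume_Icc, sub_zero]
        have h2 : (((2:ℝ≥0∞)).toReal)⁻¹ = ((2:ℝ))⁻¹ := by norm_num
        rw [h2, ENNReal.ofReal_rpow_of_nonneg hT (by norm_num),
          ← ENNReal.ofReal_mul (by positivity), show (T ^ ((2:ℝ))⁻¹) = Real.sqrt T by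
            rw [Real.sqrt_eq_rpow]; norm_num, mul_comm]

/-- A rectangular matrix as a continuous linear map between Euclidean spaces. -/
def matCLM {a b : ℕ} (M : Matrix (Fin a) (Fin b) ℝ) :
    EuclideanSpace ℝ (Fin b) →L[ℝ] EuclideanSpace ℝ (Fin a) :=
  LinearMap.toContinuousLinearMap (Matrix.toEuclideanLin M)

lemma matCLM_apply' {a b : ℕ} (M : Matrix (Fin a) (Fin b) ℝ) (x : EuclideanSpace ℝ (Fin b)) :
    matCLM M x = WithLp.toLp 2 (M.mulVec x) := by
  simp [matCLM, Matrix.toEuclideanLin_apply]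

def matCLMl {a b : ℕ} : Matrix (Fin a) (Fin b) ℝ →ₗ[ℝ]
    (EuclideanSpace ℝ (Fin b) →L[ℝ] EuclideanSpace ℝ (Fin a)) where
  toFun := matCLM
  map_add' M N := by ext x; simp [matCLM]
  map_smul' c M := by ext x; simp [matCLM]

lemma continuous_matCLM {a b : ℕ} : Continuous (matCLM : Matrix (Fin a) (Fin b) ℝ → _) :=
  LinearMap.continuous_of_finiteDimensional (matCLMl)

section Kernel

variable {n m : ℕ} (T : ℝ) (A : ℝ → Matrix (Fin n) (Fin n) ℝ)
  (B : ℝ → Matrix (Fin n) (Fin m) ℝ)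

lemma cont_mat (hA : ∀ i j, Continuous fun θ => A θ i j)
    (hB : ∀ i j, Continuous fun θ => B θ i j) : Continuous fun p : ℝ × ℝ =>
    ((B p.1)ᵀ * NormedSpace.exp ((T - p.2) • (A p.1)ᵀ) : Matrix (Fin m) (Fin n) ℝ) := by
  have hAc : Continuous fun p : ℝ × ℝ => (A p.1)ᵀ := by
    apply continuous_matrix
    intro i j
    exact (hA j i).comp continuous_fst
  have hBc : Continuous fun p : ℝ × ℝ => (B p.1)ᵀ := by
    apply continuous_matrix
    intro i j
    exact (hB j i).comp continuous_fst
  have h1 : Continuous fun p : ℝ × ℝ => (T - p.2) • (A p.1)ᵀ :=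
    ((continuous_const.sub continuous_snd)).smul hAc
  exact hBc.matrix_mul (NormedSpace.exp_continuous.comp h1)

lemma cont_kernel (hA : ∀ i j, Continuous fun θ => A θ i j)
    (hB : ∀ i j, Continuous fun θ => B θ i j) (v : EuclideanSpace ℝ (Fin n)) :
    Continuous fun p : ℝ × ℝ => RadjK T (A p.1) (B p.1) v p.2 := by
  have : (fun p : ℝ × ℝ => RadjK T (A p.1) (B p.1) v p.2)
      = fun p => matCLM ((B p.1)ᵀ * NormedSpace.exp ((T - p.2) • (A p.1)ᵀ)) v := by
    funext p; rw [matCLM_apply']; rfl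
  rw [this]
  exact (ContinuousLinearMap.apply ℝ _ v).continuous.comp
    (continuous_matCLM.comp (cont_mat T A B hA hB))

variable (hA : ∀ i j, Continuous fun θ => A θ i j) (hB : ∀ i j, Continuous fun θ => B θ i j)

/-- The kernel section `k_θ v` as an element of `L²`. -/
def kfun (θ : ℝ) (v : EuclideanSpace ℝ (Fin n)) : L2 m T :=
  (memLp_of_cont T (fun s => RadjK T (A θ) (B θ) v s)
    ((cont_kernel T A B hA hB v).comp (Continuous.prodMk_right θ))).toLp _

lemma integrable_integrand (u : L2 m T) (θ : ℝ) :
    Integrable (fun s => matCLM (NormedSpace.exp ((T - s) • A θ) * B θ) (u s)) (muT T) := by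
  have hNc : Continuous fun s : ℝ => matCLM (NormedSpace.exp ((T - s) • A θ) * B θ) := by
    apply continuous_matCLM.comp
    exact ((NormedSpace.exp_continuous.comp
      (((continuous_const.sub continuous_id)).smul continuous_const)).matrix_mul
        continuous_const)
  obtain ⟨C, hC⟩ := (isCompact_Icc (a := (0:ℝ)) (b := T)).exists_bound_of_continuousOn
    (hNc.norm.continuousOn)
  have hmeas : AEStronglyMeasurable
      (fun s => matCLM (NormedSpace.exp ((T - s) • A θ) * B θ) (u s)) (muT T) := by
    have h1 : AEStronglyMeasurable
        (fun s => (matCLM (NormedSpace.exp ((T - s) • A θ) * B θ), (u s : EuclideanSpace ℝ (Fin m))))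
        (muT T) := hNc.aestronglyMeasurable.prodMk (Lp.aestronglyMeasurable u)
    exact isBoundedBilinearMap_apply.continuous.comp_aestronglyMeasurable h1
  have hu1 : Integrable (fun s => (u s : EuclideanSpace ℝ (Fin m))) (muT T) :=
    memLp_one_iff_integrable.mp ((Lp.memLp u).mono_exponent (by norm_num))
  refine Integrable.mono' ((hu1.norm).const_mul C) hmeas ?_
  unfold muT
  filter_upwards [ae_restrict_mem measurableSet_Icc] with s hs
  calc ‖matCLM (NormedSpace.exp ((T - s) • A θ) * B θ) (u s)‖
      ≤ ‖matCLM (NormedSpace.exp ((T - s) • A θ) * B θ)‖ * ‖u s‖ := ContinuousLinearMap.le_opNorm _ _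
    _ ≤ C * ‖u s‖ := by
        have h9 := hC s hs
        rw [norm_norm] at h9
        exact mul_le_mul_of_nonneg_right h9 (norm_nonneg _)

lemma pointwise_adjoint (θ s : ℝ) (v : EuclideanSpace ℝ (Fin n))
    (x : EuclideanSpace ℝ (Fin m)) :
    ⟪x, RadjK T (A θ) (B θ) v s⟫ = ⟪matCLM (NormedSpace.exp ((T - s) • A θ) * B θ) x, v⟫ := by
  rw [matCLM_apply']
  have h1 : RadjK T (A θ) (B θ) v s
      = WithLp.toLp 2 (((NormedSpace.exp ((T - s) • A θ) * B θ)ᵀ).mulVec v) := by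
    rw [RadjK, Matrix.transpose_mul, ← Matrix.exp_transpose, Matrix.transpose_smul]
  rw [h1]
  set M := NormedSpace.exp ((T - s) • A θ) * B θ with hM
  simp only [EuclideanSpace.inner_eq_star_dotProduct, star_trivial]
  rw [mulVec_transpose, dotProduct_mulVec]

/-- The adjoint identity `⟪u, k_θ v⟫ = ⟪(Ru)(θ), v⟫`. -/
lemma adjoint_id (u : L2 m T) (θ : ℝ) (v : EuclideanSpace ℝ (Fin n)) :
    ⟪u, kfun T A B hA hB θ v⟫ = ⟪RopFam T A B u θ, v⟫ := by
  have hint := integrable_integrand T A B u θ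
  have h1 : ⟪u, kfun T A B hA hB θ v⟫
      = ∫ s, ⟪(u s : EuclideanSpace ℝ (Fin m)), RadjK T (A θ) (B θ) v s⟫ ∂(muT T) := by
    rw [MeasureTheory.L2.inner_def]
    refine integral_congr_ae ?_
    filter_upwards [MemLp.coeFn_toLp (memLp_of_cont T (fun s => RadjK T (A θ) (B θ) v s)
      ((cont_kernel T A B hA hB v).comp (Continuous.prodMk_right θ)))] with s hs
    rw [show (kfun T A B hA hB θ v : ℝ → EuclideanSpace ℝ (Fin m)) s
      = RadjK T (A θ) (B θ) v s from hs]
  rw [h1]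
  have h2 : ∀ s : ℝ, ⟪(u s : EuclideanSpace ℝ (Fin m)), RadjK T (A θ) (B θ) v s⟫
      = ⟪matCLM (NormedSpace.exp ((T - s) • A θ) * B θ) (u s), v⟫ :=
    fun s => pointwise_adjoint T A B θ s v (u s)
  simp_rw [h2]
  have h3 : ∀ s : ℝ, ⟪matCLM (NormedSpace.exp ((T - s) • A θ) * B θ) (u s), v⟫
      = ⟪v, matCLM (NormedSpace.exp ((T - s) • A θ) * B θ) (u s)⟫ := fun s => real_inner_comm _ _
  simp_rw [h3]
  rw [integral_inner hint v]
  have h4 : RopFam T A B u θ = ∫ s, matCLM (NormedSpace.exp ((T - s) • A θ) * B θ) (u s) ∂(muT T) := by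
    rw [RopFam, RopK]
    refine integral_congr_ae (Filter.Eventually.of_forall fun s => ?_)
    exact (matCLM_apply' _ _).symm
  rw [h4, real_inner_comm]

set_option maxHeartbeats 1000000 in
/-- Continuity (at a point) of `θ ↦ k_θ v` in `L²`. -/
lemma kfun_cont_at (hT : 0 ≤ T) (θ₀ : ℝ) (v : EuclideanSpace ℝ (Fin n)) {ε : ℝ} (hε : 0 < ε) :
    ∃ δ > (0:ℝ), ∀ θ : ℝ, |θ - θ₀| < δ →
      ‖kfun T A B hA hB θ v - kfun T A B hA hB θ₀ v‖ ≤ ε := by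
  set ε' := ε / (Real.sqrt T + 1) with hε'
  have hε'pos : 0 < ε' := by
    apply div_pos hε
    have := Real.sqrt_nonneg T
    linarith
  -- the continuous family of kernels, curried
  set F : C(ℝ × (Set.Icc (0:ℝ) T), EuclideanSpace ℝ (Fin m)) :=
    ⟨fun p => RadjK T (A p.1) (B p.1) v p.2.1,
      (cont_kernel T A B hA hB v).comp (continuous_fst.prodMk
        (continuous_subtype_val.comp continuous_snd))⟩ with hF
  have hGc : Continuous F.curry := F.curry.continuous
  have hcont := (Metric.continuous_iff.mp hGc) θ₀ ε' hε'pos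
  obtain ⟨δ, hδpos, hδ⟩ := hcont
  refine ⟨δ, hδpos, fun θ hθ => ?_⟩
  have hd : dist (F.curry θ) (F.curry θ₀) < ε' := hδ θ (by simpa [Real.dist_eq] using hθ)
  have hpt : ∀ s ∈ Set.Icc (0:ℝ) T,
      ‖RadjK T (A θ) (B θ) v s - RadjK T (A θ₀) (B θ₀) v s‖ ≤ ε' := by
    intro s hs
    have h1 : dist (F.curry θ ⟨s, hs⟩) (F.curry θ₀ ⟨s, hs⟩) ≤ dist (F.curry θ) (F.curry θ₀) :=
      ContinuousMap.dist_apply_le_dist _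
    have h2 : F.curry θ ⟨s, hs⟩ = RadjK T (A θ) (B θ) v s := rfl
    have h3 : F.curry θ₀ ⟨s, hs⟩ = RadjK T (A θ₀) (B θ₀) v s := rfl
    rw [h2, h3] at h1
    rw [← dist_eq_norm]
    exact h1.trans hd.le
  have hle := norm_toLp_sub_le hT
    (memLp_of_cont T (fun s => RadjK T (A θ) (B θ) v s)
      ((cont_kernel T A B hA hB v).comp (Continuous.prodMk_right θ)))
    (memLp_of_cont T (fun s => RadjK T (A θ₀) (B θ₀) v s)
      ((cont_kernel T A B hA hB v).comp (Continuous.prodMk_right θ₀))) hε'pos.le hpt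
  refine hle.trans ?_
  rw [hε']
  rw [div_mul_eq_mul_div, div_le_iff₀ (by positivity)]
  have h4 := Real.sqrt_nonneg T
  nlinarith

end Kernel

/-- If `u` has minimal norm on the affine line `u + ℝ z`, then `u ⟂ z`. -/
lemma min_inner_zero {H : Type*} [NormedAddCommGroup H] [InnerProductSpace ℝ H] (u z : H)
    (h : ∀ t : ℝ, ‖u‖ ≤ ‖u + t • z‖) : ⟪u, z⟫ = 0 := by
  rcases eq_or_ne z 0 with rfl | hz
  · simp
  have hz2 : 0 < ‖z‖ ^ 2 := by
    have := norm_pos_iff.mpr hz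
    positivity
  set t := -(⟪u, z⟫) / (‖z‖ ^ 2) with ht
  have expand : ‖u + t • z‖ ^ 2 = ‖u‖ ^ 2 + 2 * (t * ⟪u, z⟫) + t ^ 2 * ‖z‖ ^ 2 := by
    rw [@norm_add_sq_real, real_inner_smul_right, norm_smul, mul_pow, Real.norm_eq_abs, sq_abs]
  have hsq : ‖u‖ ^ 2 ≤ ‖u + t • z‖ ^ 2 := by
    have := h t
    nlinarith [norm_nonneg u, norm_nonneg (u + t • z)]
  rw [expand] at hsq
  have key : 0 ≤ 2 * (t * ⟪u, z⟫) + t ^ 2 * ‖z‖ ^ 2 := by linarith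
  have hformula : 2 * (t * ⟪u, z⟫) + t ^ 2 * ‖z‖ ^ 2 = -(⟪u, z⟫ ^ 2) / ‖z‖ ^ 2 := by
    rw [ht]
    field_simp
    ring
  rw [hformula] at key
  have h10 : 0 ≤ -(⟪u, z⟫ ^ 2) := by
    have h11 := mul_nonneg key hz2.le
    rwa [div_mul_cancel₀ _ (ne_of_gt hz2)] at h11
  have h12 : ⟪u, z⟫ ^ 2 = 0 := le_antisymm (by linarith) (sq_nonneg _)
  exact pow_eq_zero_iff (by norm_num) |>.mp h12

end Colloc


set_option maxHeartbeats 4000000 in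
/-- if `f ∈ Im R` and the fill distance `Δ_N → 0`, then the minimal-norm
collocation solutions `u_{∥N}` converge in `L²([0,T],ℝᵐ)` to the minimal-norm solution
`R♯f` of `Ru = f` (here `f = R uf` with `uf = R♯f`). -/
theorem collocation_convergence {n m : ℕ} (T θm θp : ℝ) (hT : 0 < T) (hθ : θm ≤ θp)
    (A : ℝ → Matrix (Fin n) (Fin n) ℝ) (B : ℝ → Matrix (Fin n) (Fin m) ℝ)
    (hA : ∀ i j, Continuous fun θ => A θ i j) (hB : ∀ i j, Continuous fun θ => B θ i j)
    (uf : L2 m T)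
    (hufmin : ∀ w : L2 m T,
      (∀ θ ∈ Set.Icc θm θp, RopFam T A B w θ = RopFam T A B uf θ) → ‖uf‖ ≤ ‖w‖)
    (NN : ℕ → ℕ) (θs : ∀ j, Fin (NN j) → ℝ)
    (hθsP : ∀ j k, θs j k ∈ Set.Icc θm θp)
    (hfill : ∀ ε > (0:ℝ), ∀ᶠ j in Filter.atTop,
      ∀ θ ∈ Set.Icc θm θp, ∃ k, |θs j k - θ| < ε)
    (upar : ℕ → L2 m T)
    (hupar : ∀ j k, RopFam T A B (upar j) (θs j k) = RopFam T A B uf (θs j k))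
    (huparmin : ∀ j, ∀ w : L2 m T,
      (∀ k, RopFam T A B w (θs j k) = RopFam T A B uf (θs j k)) → ‖upar j‖ ≤ ‖w‖) :
    Filter.Tendsto (fun j => ‖upar j - uf‖) Filter.atTop (nhds 0) := by
  classical
  have hT0 : (0:ℝ) ≤ T := hT.le
  set P := Set.Icc θm θp with hP
  -- notation
  set kf : ℝ → EuclideanSpace ℝ (Fin n) → L2 m T := Colloc.kfun T A B hA hB with hkf
  have hadj : ∀ (u : L2 m T) (θ : ℝ) (v : EuclideanSpace ℝ (Fin n)),
      ⟪u, kf θ v⟫ = ⟪RopFam T A B u θ, v⟫ := fun u θ v => Colloc.adjoint_id T A B hA hB u θ v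
  -- uniform norm bound
  have hub : ∀ j, ‖upar j‖ ≤ ‖uf‖ := fun j => huparmin j uf (fun k => rfl)
  have hwb : ∀ j, ‖upar j - uf‖ ≤ 2 * ‖uf‖ := by
    intro j
    calc ‖upar j - uf‖ ≤ ‖upar j‖ + ‖uf‖ := norm_sub_le _ _
      _ ≤ 2 * ‖uf‖ := by have := hub j; linarith
  -- nodes kill the inner products
  have hknode : ∀ j k (v : EuclideanSpace ℝ (Fin n)),
      ⟪upar j - uf, kf (θs j k) v⟫ = 0 := by
    intro j k v
    rw [inner_sub_left, hadj, hadj, hupar j k, sub_self]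
  -- base case: tendsto for kernel sections over P
  have hbase : ∀ θ₀ ∈ P, ∀ v : EuclideanSpace ℝ (Fin n),
      Filter.Tendsto (fun j => ⟪upar j - uf, kf θ₀ v⟫) Filter.atTop (nhds 0) := by
    intro θ₀ hθ₀ v
    rw [NormedAddCommGroup.tendsto_nhds_zero]
    intro ε hε
    have hεpos : 0 < ε / (2 * ‖uf‖ + 1) := by positivity
    obtain ⟨δ, hδpos, hδ⟩ := Colloc.kfun_cont_at T A B hA hB hT0 θ₀ v hεpos
    filter_upwards [hfill δ hδpos] with j hj
    obtain ⟨k, hk⟩ := hj θ₀ hθ₀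
    have h1 : ⟪upar j - uf, kf θ₀ v⟫
        = ⟪upar j - uf, kf θ₀ v - kf (θs j k) v⟫ := by
      rw [inner_sub_right, hknode j k v, sub_zero]
    rw [h1, Real.norm_eq_abs]
    have h2 : |⟪upar j - uf, kf θ₀ v - kf (θs j k) v⟫|
        ≤ ‖upar j - uf‖ * ‖kf θ₀ v - kf (θs j k) v‖ := abs_real_inner_le_norm _ _
    have h3 : ‖kf θ₀ v - kf (θs j k) v‖ ≤ ε / (2 * ‖uf‖ + 1) := by
      rw [norm_sub_rev]
      exact hδ (θs j k) hk
    have h4 : ‖upar j - uf‖ * ‖kf θ₀ v - kf (θs j k) v‖ ≤ (2 * ‖uf‖) * (ε / (2 * ‖uf‖ + 1)) := by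
      apply mul_le_mul (hwb j) h3 (norm_nonneg _) (by positivity)
    have h5 : (2 * ‖uf‖) * (ε / (2 * ‖uf‖ + 1)) < ε := by
      rw [mul_div_assoc', div_lt_iff₀ (by positivity)]
      nlinarith [norm_nonneg uf]
    linarith [h2.trans h4]
  -- the span of kernel sections
  set S : Set (L2 m T) := {g | ∃ θ ∈ P, ∃ v : EuclideanSpace ℝ (Fin n), g = kf θ v} with hS
  set K : Submodule ℝ (L2 m T) := Submodule.span ℝ S with hK
  have hspan : ∀ g ∈ K, Filter.Tendsto (fun j => ⟪upar j - uf, g⟫) Filter.atTop (nhds 0) := by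
    intro g hg
    induction hg using Submodule.span_induction with
    | mem g hgS =>
        obtain ⟨θ₀, hθ₀, v, rfl⟩ := hgS
        exact hbase θ₀ hθ₀ v
    | zero => simpa using tendsto_const_nhds
    | add g h hgK hhK hgt hht =>
        have := hgt.add hht
        simpa [inner_add_right] using this
    | smul c g hgK hgt =>
        have := hgt.const_mul c
        simpa [real_inner_smul_right, mul_comm] using this
  -- uf lies in the closure of K
  have hufcl : uf ∈ closure (K : Set (L2 m T)) := by
    have horth : uf ∈ Kᗮᗮ := by
      rw [Submodule.mem_orthogonal]
      intro z hz
      rw [Submodule.mem_orthogonal] at hz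
      have hz0 : ∀ θ ∈ P, ∀ v : EuclideanSpace ℝ (Fin n), ⟪z, kf θ v⟫ = 0 := by
        intro θ hθ v
        rw [real_inner_comm]
        exact hz _ (Submodule.subset_span ⟨θ, hθ, v, rfl⟩)
      have hmin : ∀ t : ℝ, ‖uf‖ ≤ ‖uf + t • z‖ := by
        intro t
        apply hufmin
        intro θ hθ
        have hv : ∀ v : EuclideanSpace ℝ (Fin n),
            ⟪RopFam T A B (uf + t • z) θ - RopFam T A B uf θ, v⟫ = 0 := by
          intro v
          rw [inner_sub_left, ← hadj, ← hadj]
          have : ⟪uf + t • z, kf θ v⟫ = ⟪uf, kf θ v⟫ + t * ⟪z, kf θ v⟫ := by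
            rw [inner_add_left, real_inner_smul_left]
          rw [this, hz0 θ hθ v]
          ring
        have := hv (RopFam T A B (uf + t • z) θ - RopFam T A B uf θ)
        rw [real_inner_self_eq_norm_sq] at this
        have hzero : RopFam T A B (uf + t • z) θ - RopFam T A B uf θ = 0 := by
          have hn : ‖RopFam T A B (uf + t • z) θ - RopFam T A B uf θ‖ = 0 := by
            nlinarith [norm_nonneg (RopFam T A B (uf + t • z) θ - RopFam T A B uf θ)]
          exact norm_eq_zero.mp hn
        exact sub_eq_zero.mp hzero
      have := Colloc.min_inner_zero uf z hmin
      rw [real_inner_comm] at this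
      exact this
    rw [Submodule.orthogonal_orthogonal_eq_closure] at horth
    rw [← Submodule.topologicalClosure_coe]
    exact horth
  -- main inner product convergence
  have hmain : Filter.Tendsto (fun j => ⟪upar j - uf, uf⟫) Filter.atTop (nhds 0) := by
    rw [NormedAddCommGroup.tendsto_nhds_zero]
    intro ε hε
    have hε' : 0 < ε / (2 * (2 * ‖uf‖ + 1)) := by positivity
    obtain ⟨g, hgK, hgd⟩ := Metric.mem_closure_iff.mp hufcl _ hε'
    have hg := hspan g hgK
    rw [NormedAddCommGroup.tendsto_nhds_zero] at hg
    filter_upwards [hg (ε / 2) (by positivity)] with j hj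
    rw [Real.norm_eq_abs] at hj ⊢
    have h1 : ⟪upar j - uf, uf⟫ = ⟪upar j - uf, g⟫ + ⟪upar j - uf, uf - g⟫ := by
      rw [inner_sub_right]; ring
    have h2 : |⟪upar j - uf, uf - g⟫| ≤ ‖upar j - uf‖ * ‖uf - g‖ := abs_real_inner_le_norm _ _
    have h3 : ‖uf - g‖ ≤ ε / (2 * (2 * ‖uf‖ + 1)) := by
      rw [← dist_eq_norm]
      exact hgd.le
    have h4 : ‖upar j - uf‖ * ‖uf - g‖ ≤ (2 * ‖uf‖) * (ε / (2 * (2 * ‖uf‖ + 1))) :=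
      mul_le_mul (hwb j) h3 (norm_nonneg _) (by positivity)
    have h5 : (2 * ‖uf‖) * (ε / (2 * (2 * ‖uf‖ + 1))) < ε / 2 := by
      rw [mul_div_assoc', div_lt_iff₀ (by positivity)]
      nlinarith [norm_nonneg uf, hε]
    calc |⟪upar j - uf, uf⟫| ≤ |⟪upar j - uf, g⟫| + |⟪upar j - uf, uf - g⟫| := by
          rw [h1]; exact abs_add_le _ _
      _ < ε / 2 + ε / 2 := by
          apply add_lt_add hj
          linarith [h2.trans h4]
      _ = ε := by ring
  -- conclude via the energy identity
  have hbound : ∀ j, ‖upar j - uf‖ ≤ Real.sqrt (2 * |⟪upar j - uf, uf⟫|) := by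
    intro j
    have e1 : ‖upar j - uf‖ ^ 2 = ‖upar j‖ ^ 2 - 2 * ⟪upar j, uf⟫ + ‖uf‖ ^ 2 :=
      @norm_sub_sq_real _ _ _ _ _
    have e2 : ⟪upar j, uf⟫ = ⟪upar j - uf, uf⟫ + ‖uf‖ ^ 2 := by
      rw [inner_sub_left, real_inner_self_eq_norm_sq]; ring
    have e3 : ‖upar j‖ ^ 2 ≤ ‖uf‖ ^ 2 := by
      have := hub j
      nlinarith [norm_nonneg (upar j), norm_nonneg uf]
    have e4 := neg_abs_le (⟪upar j - uf, uf⟫)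
    have hsq2 : ‖upar j - uf‖ ^ 2 ≤ 2 * |⟪upar j - uf, uf⟫| := by nlinarith
    calc ‖upar j - uf‖ = Real.sqrt (‖upar j - uf‖ ^ 2) := (Real.sqrt_sq (norm_nonneg _)).symm
      _ ≤ Real.sqrt (2 * |⟪upar j - uf, uf⟫|) := Real.sqrt_le_sqrt hsq2
  have hsqrt : Filter.Tendsto (fun j => Real.sqrt (2 * |⟪upar j - uf, uf⟫|))
      Filter.atTop (nhds 0) := by
    have h1 : Filter.Tendsto (fun j => |⟪upar j - uf, uf⟫|) Filter.atTop (nhds 0) := by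
      have := hmain.abs
      simpa using this
    have h2 : Filter.Tendsto (fun j => 2 * |⟪upar j - uf, uf⟫|) Filter.atTop (nhds 0) := by
      have := h1.const_mul 2
      simpa using this
    have h3 := (Real.continuous_sqrt.tendsto 0).comp h2
    rw [Real.sqrt_zero] at h3
    exact h3
  exact squeeze_zero (fun j => norm_nonneg _) hbound hsqrt
end
end
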